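/- Let p ≥ 1 and let λ be a partition contained in the p × (p+1) rectangle such that its conjugate equals its complement in p × (p+1), i.e. λ*_i = (p+1) − λ_{p+1−i} for all 1 ≤ i ≤ p (equivalently λ_{p+1−i} + #{j : λ_j ≥ i} = p+1 for all i). Then λ is the staircase partition (p, p−1, …, 2, 1). -/
import Mathlib


/-- if a partition `λ ⊆ p × (p+1)` satisfies
`λ_{p+1-i} + #{j : λ_j ≥ i} = p+1` for all `1 ≤ i ≤ p` (i.e. its conjugate equals
its complement in `p × (p+1)`), then `λ` is the staircase `(p, p-1, …, 1)`.
0-indexed: the row index `i : Fin p` represents `i+1`. -/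
theorem stmt_4 (p : ℕ) (hp : 1 ≤ p) (l : Fin p → ℕ) (hl : Antitone l)
    (hlq : ∀ i, l i ≤ p + 1)
    (h : ∀ i : Fin p,
      l i.rev + (Finset.univ.filter (fun j : Fin p => i.val + 1 ≤ l j)).card = p + 1) :
    ∀ i : Fin p, l i = p - i.val := by
  have key : ∀ i : Fin p, l i.rev = i.val + 1 := by
    intro i
    set S := Finset.univ.filter (fun j : Fin p => i.val + 1 ≤ l j) with hS
    have hdown : ∀ j j' : Fin p, j ≤ j' → j' ∈ S → j ∈ S := by
      intro j j' hjj hj'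
      simp only [hS, Finset.mem_filter, Finset.mem_univ, true_and] at *
      exact hj'.trans (hl hjj)
    have hmem : ∀ j : Fin p, j ∈ S ↔ j.val < S.card := by
      intro j
      constructor
      · intro hj
        have hsub : Finset.Iic j ⊆ S := fun j' hj' =>
          hdown j' j (Finset.mem_Iic.mp hj') hj
        have := Finset.card_le_card hsub
        rw [Fin.card_Iic] at this
        omega
      · intro hj
        by_contra hjS
        have hsub : S ⊆ Finset.Iio j := by
          intro j' hj'
          rw [Finset.mem_Iio]
          by_contra hlt
          exact hjS (hdown j j' (le_of_not_gt hlt) hj')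
        have := Finset.card_le_card hsub
        rw [Fin.card_Iio] at this
        omega
    have hcard : S.card = p + 1 - l i.rev := by
      rw [hS]
      have := h i
      omega
    have hrev : i.rev ∈ S ↔ (i.rev : ℕ) < p + 1 - l i.rev := by rw [hmem, hcard]
    have hrevval : (i.rev : ℕ) = p - 1 - i.val := by
      rw [Fin.val_rev]; omega
    have hle : l i.rev ≤ p + 1 := hlq _
    have hi : i.val < p := i.isLt
    simp only [hS, Finset.mem_filter, Finset.mem_univ, true_and] at hrev
    omega
  intro i
  have h1 := key i.rev
  rw [Fin.rev_rev] at h1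
  have h2 : (i.rev : ℕ) = p - 1 - i.val := by rw [Fin.val_rev]; omega
  have hi : i.val < p := i.isLt
  omega
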